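/- For all real x, x̂ > 0 and all integers n ≥ 1, Γ(n+x)/Γ(x) ≥ c·x^a, where a = (ψ(n+x̂) − ψ(x̂))·x̂ and c = [Γ(n+x̂)/Γ(x̂)]·x̂^{−a}; the bound holds with equality when x = x̂. -/

import Mathlib

/-- The digamma function `ψ = Γ'/Γ = (log Γ)'`. -/
noncomputable def digamma (x : ℝ) : ℝ := deriv (fun y => Real.log (Real.Gamma y)) x

open Real Finset

lemma digamma_rec (x : ℝ) (hx : 0 < x) : digamma (x + 1) = digamma x + 1 / x := by
  have hder : ∀ {y : ℝ}, 0 < y → DifferentiableAt ℝ (fun y => Real.log (Real.Gamma y)) y := by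
    intro y hy
    have h : ∀ m : ℕ, y ≠ -m := fun m => by
      have : (0:ℝ) ≤ m := Nat.cast_nonneg m
      intro h; rw [h] at hy; linarith
    exact (Real.differentiableAt_Gamma h).log (Real.Gamma_ne_zero h)
  simp only [digamma]
  rw [← deriv_comp_add_const (fun y => Real.log (Real.Gamma y)) 1, one_div, ← Real.deriv_log,
    ← deriv_add (hder hx) (Real.differentiableAt_log hx.ne')]
  apply Filter.EventuallyEq.deriv_eq
  filter_upwards [eventually_gt_nhds hx] with y hy
  rw [Real.Gamma_add_one hy.ne', Real.log_mul hy.ne' (Real.Gamma_pos_of_pos hy).ne', add_comm]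
  rfl

lemma digamma_nat_add (n : ℕ) (x : ℝ) (hx : 0 < x) :
    digamma (n + x) = digamma x + ∑ k ∈ range n, 1 / (x + k) := by
  induction n with
  | zero => simp
  | succ n ih =>
    have h1 : ((n : ℝ) + 1) + x = (n + x) + 1 := by ring
    rw [Nat.cast_succ, h1, digamma_rec _ (by positivity), ih, sum_range_succ,
      show (n:ℝ) + x = x + n from add_comm _ _, add_assoc]

lemma Gamma_nat_add (n : ℕ) (x : ℝ) (hx : 0 < x) :
    Real.Gamma (n + x) = (∏ k ∈ range n, (x + k)) * Real.Gamma x := by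
  induction n with
  | zero => simp
  | succ n ih =>
    have h1 : ((n : ℝ) + 1) + x = ((n : ℝ) + x) + 1 := by ring
    rw [Nat.cast_succ, h1, Real.Gamma_add_one (by positivity), ih, prod_range_succ]
    ring

lemma key_pow (c r : ℝ) (hc : 0 ≤ c) (hc1 : c ≤ 1) (hr : 0 ≤ r) :
    r ^ c ≤ 1 + c * (r - 1) := by
  have := Real.geom_mean_le_arith_mean2_weighted hc (by linarith : (0:ℝ) ≤ 1 - c)
    hr zero_le_one (by ring)
  rw [Real.one_rpow, mul_one, mul_one] at this
  linarith

/-- Power lower bound (Minka): for `x, x̂ > 0` and integer `n ≥ 1`,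
`Γ(n+x)/Γ(x) ≥ c · x^a` where `a = (ψ(n+x̂) − ψ(x̂)) x̂` and
`c = Γ(n+x̂)/Γ(x̂) · x̂^{−a}`, with equality when `x = x̂`. -/
theorem gamma_ratio_power_bound (n : ℕ) (hn : 1 ≤ n) (x xhat : ℝ)
    (hx : 0 < x) (hxhat : 0 < xhat) :
    Real.Gamma (n + x) / Real.Gamma x
        ≥ (Real.Gamma (n + xhat) / Real.Gamma xhat
              * xhat ^ (-((digamma (n + xhat) - digamma xhat) * xhat)))
            * x ^ ((digamma (n + xhat) - digamma xhat) * xhat)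
      ∧ (x = xhat →
          Real.Gamma (n + x) / Real.Gamma x
            = (Real.Gamma (n + xhat) / Real.Gamma xhat
                  * xhat ^ (-((digamma (n + xhat) - digamma xhat) * xhat)))
                * x ^ ((digamma (n + xhat) - digamma xhat) * xhat)) := by
  set A : ℝ := (digamma (n + xhat) - digamma xhat) * xhat with hA
  have hratio : ∀ y : ℝ, 0 < y →
      Real.Gamma (n + y) / Real.Gamma y = ∏ k ∈ range n, (y + k) := by
    intro y hy
    rw [Gamma_nat_add n y hy, mul_div_assoc,
      div_self (Real.Gamma_pos_of_pos hy).ne', mul_one]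
  have hAsum : A = ∑ k ∈ range n, xhat / (xhat + k) := by
    rw [hA, digamma_nat_add n xhat hxhat, add_sub_cancel_left, sum_mul]
    refine Finset.sum_congr rfl fun k _ => ?_
    field_simp
  -- key rearrangement of the RHS
  have hrhs : (Real.Gamma (n + xhat) / Real.Gamma xhat * xhat ^ (-A)) * x ^ A
      = (∏ k ∈ range n, (xhat + k)) * (x / xhat) ^ A := by
    rw [hratio xhat hxhat, Real.div_rpow hx.le hxhat.le, Real.rpow_neg hxhat.le]
    ring
  have hprod_pos : ∀ k ∈ range n, (0:ℝ) ≤ (xhat + k) * (x / xhat) ^ (xhat / (xhat + k)) := by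
    intro k _
    positivity
  constructor
  · rw [hratio x hx, hrhs, hAsum, Real.rpow_sum_of_pos (by positivity) _ _,
      ← Finset.prod_mul_distrib]
    refine Finset.prod_le_prod hprod_pos fun k _ => ?_
    have hck0 : (0:ℝ) ≤ xhat / (xhat + k) := by positivity
    have hck1 : xhat / (xhat + k) ≤ 1 := by
      rw [div_le_one (by positivity)]
      simp [Nat.cast_nonneg]
    have := key_pow (xhat / (xhat + k)) (x / xhat) hck0 hck1 (by positivity)
    have hkk : (0:ℝ) < xhat + k := by positivity
    have h2 : 1 + xhat / (xhat + k) * (x / xhat - 1) = (x + k) / (xhat + k) := by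
      field_simp
      ring
    rw [h2] at this
    calc (xhat + k) * (x / xhat) ^ (xhat / (xhat + k))
        ≤ (xhat + k) * ((x + k) / (xhat + k)) := by
          exact mul_le_mul_of_nonneg_left this hkk.le
      _ = x + k := by field_simp
  · intro hxe
    subst hxe
    rw [hrhs, div_self hx.ne', Real.one_rpow, mul_one, hratio x hx]
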